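/- Let n ≥ 5 and let a league outcome with n teams be tied with common score p. If p ≥ 2n−1, then for every team A, (n−1)·p − P̄(A) ≥ 2(n−1)(n−2) + 3. -/

import Mathlib

open Finset

inductive MatchResult : Type
  | homeWin : MatchResult
  | draw : MatchResult
  | awayWin : MatchResult
  deriving DecidableEq

instance instFintypeMatchResult : Fintype MatchResult :=
  ⟨{.homeWin, .draw, .awayWin}, fun x => by cases x <;> simp⟩

/-- A league outcome: a result for each ordered pair of distinct teams
(the first component is the home team). -/
abbrev LeagueOutcome (n : ℕ) : Type :=
  {p : Fin n × Fin n // p.1 ≠ p.2} → MatchResult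

/-- Points earned by the home team. -/
def homePts : MatchResult → ℕ
  | .homeWin => 3
  | .draw => 1
  | .awayWin => 0

/-- Points earned by the away team. -/
def awayPts : MatchResult → ℕ
  | .homeWin => 0
  | .draw => 1
  | .awayWin => 3

/-- Total points of team `i`: sum over all matches of the points `i` earns in them. -/
def totalPoints {n : ℕ} (r : LeagueOutcome n) (i : Fin n) : ℕ :=
  ∑ m : {p : Fin n × Fin n // p.1 ≠ p.2},
    ((if m.val.1 = i then homePts (r m) else 0) +
     (if m.val.2 = i then awayPts (r m) else 0))

/-- Total points the other teams earn in their matches against team `i`. -/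
def oppPoints {n : ℕ} (r : LeagueOutcome n) (i : Fin n) : ℕ :=
  ∑ m : {p : Fin n × Fin n // p.1 ≠ p.2},
    ((if m.val.1 = i then awayPts (r m) else 0) +
     (if m.val.2 = i then homePts (r m) else 0))

/-- Number of matches that team `i` wins. -/
def wins {n : ℕ} (r : LeagueOutcome n) (i : Fin n) : ℕ :=
  (Finset.univ.filter (fun m : {p : Fin n × Fin n // p.1 ≠ p.2} =>
    (m.val.1 = i ∧ r m = .homeWin) ∨ (m.val.2 = i ∧ r m = .awayWin))).card

/-- Number of matches that team `i` draws. -/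
def draws {n : ℕ} (r : LeagueOutcome n) (i : Fin n) : ℕ :=
  (Finset.univ.filter (fun m : {p : Fin n × Fin n // p.1 ≠ p.2} =>
    (m.val.1 = i ∨ m.val.2 = i) ∧ r m = .draw)).card

/-- Number of matches that team `i` loses. -/
def losses {n : ℕ} (r : LeagueOutcome n) (i : Fin n) : ℕ :=
  (Finset.univ.filter (fun m : {p : Fin n × Fin n // p.1 ≠ p.2} =>
    (m.val.1 = i ∧ r m = .awayWin) ∨ (m.val.2 = i ∧ r m = .homeWin))).card

namespace TiedAux

abbrev Mt (n : ℕ) := {p : Fin n × Fin n // p.1 ≠ p.2}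

/-- total points = 3*wins + draws -/
lemma totalPoints_eq {n : ℕ} (r : LeagueOutcome n) (i : Fin n) :
    totalPoints r i = 3 * wins r i + draws r i := by
  rw [totalPoints, wins, draws, Finset.card_filter, Finset.card_filter, Finset.mul_sum,
    ← Finset.sum_add_distrib]
  refine Finset.sum_congr rfl fun m _ => ?_
  have hne := m.prop
  cases hr : r m <;> by_cases h1 : m.val.1 = i <;> by_cases h2 : m.val.2 = i <;>
    simp_all [homePts, awayPts]

lemma card_home {n : ℕ} (i : Fin n) :
    (Finset.univ.filter (fun m : Mt n => m.val.1 = i)).card = n - 1 := by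
  have : (Finset.univ.filter (fun m : Mt n => m.val.1 = i)).card
      = (Finset.univ.erase i).card := by
    refine Finset.card_bij' (fun m _ => m.val.2)
      (fun j hj => ⟨(i, j), by simp [Finset.mem_erase] at hj; exact fun h => hj h.symm⟩)
      ?_ ?_ ?_ ?_
    · intro m hm
      simp only [Finset.mem_filter, Finset.mem_univ, true_and] at hm
      simp only [Finset.mem_erase, Finset.mem_univ, and_true]
      exact fun h => m.prop (hm.trans h.symm)
    · intro j hj; simp
    · intro m hm
      simp only [Finset.mem_filter, Finset.mem_univ, true_and] at hm
      exact Subtype.ext (Prod.ext hm.symm rfl)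
    · intro j hj; rfl
  rw [this, Finset.card_erase_of_mem (Finset.mem_univ i), Finset.card_univ, Fintype.card_fin]

lemma card_away {n : ℕ} (i : Fin n) :
    (Finset.univ.filter (fun m : Mt n => m.val.2 = i)).card = n - 1 := by
  have : (Finset.univ.filter (fun m : Mt n => m.val.2 = i)).card
      = (Finset.univ.erase i).card := by
    refine Finset.card_bij' (fun m _ => m.val.1)
      (fun j hj => ⟨(j, i), by simp [Finset.mem_erase] at hj; exact hj⟩)
      ?_ ?_ ?_ ?_
    · intro m hm
      simp only [Finset.mem_filter, Finset.mem_univ, true_and] at hm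
      simp only [Finset.mem_erase, Finset.mem_univ, and_true]
      exact fun h => m.prop (h.trans hm.symm)
    · intro j hj; simp
    · intro m hm
      simp only [Finset.mem_filter, Finset.mem_univ, true_and] at hm
      exact Subtype.ext (Prod.ext rfl hm.symm)
    · intro j hj; rfl
  rw [this, Finset.card_erase_of_mem (Finset.mem_univ i), Finset.card_univ, Fintype.card_fin]

lemma card_involving {n : ℕ} (i : Fin n) :
    (Finset.univ.filter (fun m : Mt n => m.val.1 = i ∨ m.val.2 = i)).card = 2 * (n - 1) := by
  rw [Finset.card_filter]
  have : ∀ m : Mt n, (if m.val.1 = i ∨ m.val.2 = i then (1:ℕ) else 0)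
      = (if m.val.1 = i then 1 else 0) + (if m.val.2 = i then 1 else 0) := by
    intro m
    have hne := m.prop
    by_cases h1 : m.val.1 = i <;> by_cases h2 : m.val.2 = i <;> simp_all
  rw [Finset.sum_congr rfl fun m _ => this m, Finset.sum_add_distrib,
    ← Finset.card_filter, ← Finset.card_filter, card_home, card_away]
  ring

/-- wins + draws + losses = 2(n-1) -/
lemma counts_total {n : ℕ} (r : LeagueOutcome n) (i : Fin n) :
    wins r i + draws r i + losses r i = 2 * (n - 1) := by
  rw [← card_involving i, wins, draws, losses, Finset.card_filter, Finset.card_filter,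
    Finset.card_filter, Finset.card_filter, ← Finset.sum_add_distrib, ← Finset.sum_add_distrib]
  refine Finset.sum_congr rfl fun m _ => ?_
  have hne := m.prop
  cases hr : r m <;> by_cases h1 : m.val.1 = i <;> by_cases h2 : m.val.2 = i <;>
    simp_all


variable {n : ℕ}

def wva (r : LeagueOutcome n) (A i : Fin n) : ℕ :=
  (Finset.univ.filter (fun m : Mt n =>
    (m.val.1 = i ∧ m.val.2 = A ∧ r m = .homeWin) ∨
    (m.val.2 = i ∧ m.val.1 = A ∧ r m = .awayWin))).card

def wo (r : LeagueOutcome n) (A i : Fin n) : ℕ :=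
  (Finset.univ.filter (fun m : Mt n =>
    (m.val.1 = i ∧ m.val.2 ≠ A ∧ r m = .homeWin) ∨
    (m.val.2 = i ∧ m.val.1 ≠ A ∧ r m = .awayWin))).card

def lva (r : LeagueOutcome n) (A i : Fin n) : ℕ :=
  (Finset.univ.filter (fun m : Mt n =>
    (m.val.1 = i ∧ m.val.2 = A ∧ r m = .awayWin) ∨
    (m.val.2 = i ∧ m.val.1 = A ∧ r m = .homeWin))).card

def lo (r : LeagueOutcome n) (A i : Fin n) : ℕ :=
  (Finset.univ.filter (fun m : Mt n =>
    (m.val.1 = i ∧ m.val.2 ≠ A ∧ r m = .awayWin) ∨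
    (m.val.2 = i ∧ m.val.1 ≠ A ∧ r m = .homeWin))).card

/-- decisive matches not involving A -/
def decOut (r : LeagueOutcome n) (A : Fin n) : ℕ :=
  (Finset.univ.filter (fun m : Mt n =>
    (m.val.1 ≠ A ∧ m.val.2 ≠ A) ∧ r m ≠ .draw)).card

lemma sum_pair_ind (s : Finset (Fin n)) {a b : Fin n} (hab : a ≠ b)
    (Q1 Q2 : Prop) [Decidable Q1] [Decidable Q2] :
    (∑ i ∈ s, if (a = i ∧ Q1) ∨ (b = i ∧ Q2) then (1:ℕ) else 0)
      = (if a ∈ s ∧ Q1 then 1 else 0) + (if b ∈ s ∧ Q2 then 1 else 0) := by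
  have hpt : ∀ i ∈ s, (if (a = i ∧ Q1) ∨ (b = i ∧ Q2) then (1:ℕ) else 0)
      = (if a = i then (if Q1 then 1 else 0) else 0)
        + (if b = i then (if Q2 then 1 else 0) else 0) := by
    intro i _
    by_cases h1 : a = i <;> by_cases h2 : b = i <;> by_cases hq1 : Q1 <;> by_cases hq2 : Q2 <;>
      simp_all
  rw [Finset.sum_congr rfl hpt, Finset.sum_add_distrib, Finset.sum_ite_eq, Finset.sum_ite_eq]
  by_cases ha : a ∈ s <;> by_cases hb : b ∈ s <;> by_cases hq1 : Q1 <;> by_cases hq2 : Q2 <;>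
    simp_all

lemma sum_wva (r : LeagueOutcome n) (A : Fin n) :
    ∑ i ∈ Finset.univ.erase A, wva r A i = losses r A := by
  unfold wva losses
  simp only [Finset.card_filter]
  rw [Finset.sum_comm]
  refine Finset.sum_congr rfl fun m _ => ?_
  rw [sum_pair_ind _ m.prop]
  have hne := m.prop
  by_cases h1 : m.val.1 = A <;> by_cases h2 : m.val.2 = A <;> cases hr : r m <;>
    simp_all [Finset.mem_erase]

lemma sum_lva (r : LeagueOutcome n) (A : Fin n) :
    ∑ i ∈ Finset.univ.erase A, lva r A i = wins r A := by
  unfold lva wins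
  simp only [Finset.card_filter]
  rw [Finset.sum_comm]
  refine Finset.sum_congr rfl fun m _ => ?_
  rw [sum_pair_ind _ m.prop]
  have hne := m.prop
  by_cases h1 : m.val.1 = A <;> by_cases h2 : m.val.2 = A <;> cases hr : r m <;>
    simp_all [Finset.mem_erase]

lemma sum_wo (r : LeagueOutcome n) (A : Fin n) :
    ∑ i ∈ Finset.univ.erase A, wo r A i = decOut r A := by
  unfold wo decOut
  simp only [Finset.card_filter]
  rw [Finset.sum_comm]
  refine Finset.sum_congr rfl fun m _ => ?_
  rw [sum_pair_ind _ m.prop]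
  have hne := m.prop
  by_cases h1 : m.val.1 = A <;> by_cases h2 : m.val.2 = A <;> cases hr : r m <;>
    simp_all [Finset.mem_erase]

lemma sum_lo (r : LeagueOutcome n) (A : Fin n) :
    ∑ i ∈ Finset.univ.erase A, lo r A i = decOut r A := by
  unfold lo decOut
  simp only [Finset.card_filter]
  rw [Finset.sum_comm]
  refine Finset.sum_congr rfl fun m _ => ?_
  rw [sum_pair_ind _ m.prop]
  have hne := m.prop
  by_cases h1 : m.val.1 = A <;> by_cases h2 : m.val.2 = A <;> cases hr : r m <;>
    simp_all [Finset.mem_erase]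

lemma wins_split (r : LeagueOutcome n) (A i : Fin n) :
    wins r i = wva r A i + wo r A i := by
  rw [wins, wva, wo, Finset.card_filter, Finset.card_filter, Finset.card_filter,
    ← Finset.sum_add_distrib]
  refine Finset.sum_congr rfl fun m _ => ?_
  have hne := m.prop
  by_cases h3 : m.val.1 = A <;> by_cases h4 : m.val.2 = A <;>
    by_cases h1 : m.val.1 = i <;> by_cases h2 : m.val.2 = i <;> cases hr : r m <;> simp_all

lemma losses_split (r : LeagueOutcome n) (A i : Fin n) :
    losses r i = lva r A i + lo r A i := by
  rw [losses, lva, lo, Finset.card_filter, Finset.card_filter, Finset.card_filter,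
    ← Finset.sum_add_distrib]
  refine Finset.sum_congr rfl fun m _ => ?_
  have hne := m.prop
  by_cases h3 : m.val.1 = A <;> by_cases h4 : m.val.2 = A <;>
    by_cases h1 : m.val.1 = i <;> by_cases h2 : m.val.2 = i <;> cases hr : r m <;> simp_all


set_option maxHeartbeats 1600000 in
lemma wva_add_lva (r : LeagueOutcome n) (A : Fin n) (hA : draws r A = 0)
    {i : Fin n} (hi : i ≠ A) : wva r A i + lva r A i = 2 := by
  rw [draws, Finset.card_eq_zero, Finset.filter_eq_empty_iff] at hA
  have hnd : ∀ m : Mt n, (m.val.1 = A ∨ m.val.2 = A) → r m ≠ .draw := by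
    intro m hm hr
    exact hA (Finset.mem_univ m) ⟨hm, hr⟩
  have h2 : wva r A i + lva r A i
      = (Finset.univ.filter (fun m : Mt n =>
          (m.val.1 = i ∧ m.val.2 = A) ∨ (m.val.2 = i ∧ m.val.1 = A))).card := by
    rw [wva, lva, Finset.card_filter, Finset.card_filter, Finset.card_filter,
      ← Finset.sum_add_distrib]
    refine Finset.sum_congr rfl fun m _ => ?_
    have hne := m.prop
    have hnd1 : m.val.1 = A → ¬ r m = .draw := fun h => hnd m (Or.inl h)
    have hnd2 : m.val.2 = A → ¬ r m = .draw := fun h => hnd m (Or.inr h)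
    cases hr : r m <;>
      by_cases h1 : m.val.1 = i <;> by_cases h2 : m.val.2 = A <;>
      by_cases h3 : m.val.2 = i <;> by_cases h4 : m.val.1 = A <;> simp_all
  rw [h2]
  have heq : (Finset.univ.filter (fun m : Mt n =>
      (m.val.1 = i ∧ m.val.2 = A) ∨ (m.val.2 = i ∧ m.val.1 = A)))
      = {(⟨(i, A), hi⟩ : Mt n), ⟨(A, i), Ne.symm hi⟩} := by
    ext m
    simp only [Finset.mem_filter, Finset.mem_univ, true_and, Finset.mem_insert,
      Finset.mem_singleton]
    constructor
    · rintro (⟨ha, hb⟩ | ⟨ha, hb⟩)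
      · left; exact Subtype.ext (Prod.ext ha hb)
      · right; exact Subtype.ext (Prod.ext hb ha)
    · rintro (rfl | rfl) <;> simp
  rw [heq, Finset.card_insert_of_notMem, Finset.card_singleton]
  intro hmem
  simp only [Finset.mem_singleton] at hmem
  exact hi (congrArg (fun m : Mt n => m.val.1) hmem)

lemma team_eq (r : LeagueOutcome n) (i : Fin n) (P : ℕ) (h : totalPoints r i = P) :
    2 * wins r i + 2 * (n - 1) = P + losses r i := by
  have h1 := totalPoints_eq r i
  have h2 := counts_total r i
  omega

def T (r : LeagueOutcome n) (A : Fin n) : ℕ :=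
  ∑ m : Mt n, if m.val.1 ≠ A ∧ m.val.2 ≠ A then homePts (r m) + awayPts (r m) else 0

lemma key1 (r : LeagueOutcome n) (A : Fin n) (p : ℕ) (h : ∀ i, totalPoints r i = p) :
    n * p = T r A + p + oppPoints r A := by
  have hsum : ∑ i : Fin n, totalPoints r i = n * p := by
    simp [h, Finset.sum_const, Finset.card_univ, mul_comm]
  have hswap : ∑ i : Fin n, totalPoints r i
      = ∑ m : Mt n, (homePts (r m) + awayPts (r m)) := by
    simp only [totalPoints]
    rw [Finset.sum_comm]
    refine Finset.sum_congr rfl fun m _ => ?_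
    rw [Finset.sum_add_distrib, Finset.sum_ite_eq, Finset.sum_ite_eq]
    simp
  have hsplit : ∑ m : Mt n, (homePts (r m) + awayPts (r m))
      = T r A + (totalPoints r A + oppPoints r A) := by
    rw [T, totalPoints, oppPoints, ← Finset.sum_add_distrib, ← Finset.sum_add_distrib]
    refine Finset.sum_congr rfl fun m _ => ?_
    have hne := m.prop
    by_cases h1 : m.val.1 = A <;> by_cases h2 : m.val.2 = A <;> simp_all <;> omega
  have := h A
  omega

lemma key2 (r : LeagueOutcome n) (A : Fin n) :
    T r A = 2 * ((Finset.univ.filter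
      (fun m : Mt n => m.val.1 ≠ A ∧ m.val.2 ≠ A)).card) + decOut r A := by
  rw [T, decOut, Finset.card_filter, Finset.card_filter, Finset.mul_sum,
    ← Finset.sum_add_distrib]
  refine Finset.sum_congr rfl fun m _ => ?_
  by_cases h1 : m.val.1 ≠ A ∧ m.val.2 ≠ A
  · cases hr : r m <;> simp [h1, hr, homePts, awayPts]
  · cases hr : r m <;> simp [h1, hr, homePts, awayPts]

lemma card_Mt : (Finset.univ : Finset (Mt n)).card = n * n - n := by
  rw [Finset.card_univ, Fintype.card_subtype]
  have h2 := Finset.card_filter_add_card_filter_not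
    (s := (Finset.univ : Finset (Fin n × Fin n))) (p := fun p => p.1 = p.2)
  have hdiag : (Finset.univ.filter (fun p : Fin n × Fin n => p.1 = p.2))
      = Finset.univ.image (fun i : Fin n => (i, i)) := by
    ext q
    simp only [Finset.mem_filter, Finset.mem_univ, true_and, Finset.mem_image]
    constructor
    · intro hq
      first
      | exact ⟨q.1, Prod.ext rfl hq⟩
      | exact ⟨q.1, Finset.mem_univ _, Prod.ext rfl hq⟩
    · rintro ⟨i, rfl⟩; rfl
  have hinj : Function.Injective (fun i : Fin n => ((i, i) : Fin n × Fin n)) := by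
    intro a b hab
    exact (Prod.ext_iff.mp hab).1
  have hd : (Finset.univ.filter (fun p : Fin n × Fin n => p.1 = p.2)).card = n := by
    rw [hdiag, Finset.card_image_of_injective _ hinj, Finset.card_univ, Fintype.card_fin]
  have htot : (Finset.univ : Finset (Fin n × Fin n)).card = n * n := by
    simp [Finset.card_univ]
  simp only [ne_eq] at h2 ⊢
  omega

lemma card_S (r : LeagueOutcome n) (A : Fin n) :
    (Finset.univ.filter (fun m : Mt n => m.val.1 ≠ A ∧ m.val.2 ≠ A)).card + 2 * (n - 1)
      = n * n - n := by
  have h1 := Finset.card_filter_add_card_filter_not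
    (s := (Finset.univ : Finset (Mt n))) (p := fun m => m.val.1 = A ∨ m.val.2 = A)
  have h2 : (Finset.univ.filter (fun m : Mt n => ¬ (m.val.1 = A ∨ m.val.2 = A)))
      = (Finset.univ.filter (fun m : Mt n => m.val.1 ≠ A ∧ m.val.2 ≠ A)) := by
    simp only [not_or, ne_eq]
  rw [h2, card_involving A, card_Mt] at h1
  omega


lemma decOut_ge (hn : 5 ≤ n) (r : LeagueOutcome n) (p : ℕ)
    (h : ∀ i, totalPoints r i = p) (hp : 2 * n - 1 ≤ p) (A : Fin n) :
    3 ≤ decOut r A := by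
  by_contra hD
  push_neg at hD
  have hA := team_eq r A p (h A)
  have hWL := counts_total r A
  have hsw : ∑ i ∈ Finset.univ.erase A, wins r i = losses r A + decOut r A := by
    rw [Finset.sum_congr rfl (fun i _ => wins_split r A i), Finset.sum_add_distrib,
      sum_wva, sum_wo]
  have hsl : ∑ i ∈ Finset.univ.erase A, losses r i = wins r A + decOut r A := by
    rw [Finset.sum_congr rfl (fun i _ => losses_split r A i), Finset.sum_add_distrib,
      sum_lva, sum_lo]
  have hcard : (Finset.univ.erase A).card = n - 1 := by
    rw [Finset.card_erase_of_mem (Finset.mem_univ A), Finset.card_univ, Fintype.card_fin]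
  have hPsum : 2 * (losses r A + decOut r A) + (n - 1) * (2 * (n - 1))
      = (n - 1) * p + (wins r A + decOut r A) := by
    have e : ∑ i ∈ Finset.univ.erase A, (2 * wins r i + 2 * (n - 1))
        = ∑ i ∈ Finset.univ.erase A, (p + losses r i) :=
      Finset.sum_congr rfl fun i _ => team_eq r i p (h i)
    rw [Finset.sum_add_distrib, Finset.sum_add_distrib, ← Finset.mul_sum, hsw, hsl,
      Finset.sum_const, Finset.sum_const, hcard, smul_eq_mul, smul_eq_mul] at e
    linarith [e]
  have hwge : n - 1 ≤ losses r A + decOut r A := by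
    rw [← hsw, ← hcard]
    have := Finset.card_nsmul_le_sum (Finset.univ.erase A) (wins r) 1
      (fun i _ => by have := team_eq r i p (h i); omega)
    simpa using this
  -- move to ℤ
  have h1n : 1 ≤ n := by omega
  have h12n : 1 ≤ 2 * n := by omega
  zify [h1n] at hA hWL hPsum hwge
  zify [h12n] at hp
  have hn' : (5:ℤ) ≤ (n:ℤ) := by exact_mod_cast hn
  have hD' : (decOut r A : ℤ) ≤ 2 := by exact_mod_cast Nat.lt_succ_iff.mp hD
  have hdA0 : (0:ℤ) ≤ (draws r A : ℤ) := Int.natCast_nonneg _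
  have key : (2*(n:ℤ) - 1) * ((p:ℤ) - 2*(n:ℤ) + 2)
      = 3 * (losses r A : ℤ) + 2 * (decOut r A : ℤ) := by
    linear_combination (-2 : ℤ) * hPsum - hA
  have hq1 : (1:ℤ) ≤ (p:ℤ) - 2*(n:ℤ) + 2 := by linarith
  have h3L : ((p:ℤ) - 2*(n:ℤ) + 2) + 3 * (losses r A : ℤ) ≤ 4*(n:ℤ) - 4 := by
    linarith
  have h2Nq : 2*(n:ℤ) * ((p:ℤ) - 2*(n:ℤ) + 2) ≤ 4*(n:ℤ) := by linarith [key]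
  have hq2 : (p:ℤ) - 2*(n:ℤ) + 2 ≤ 2 := by
    by_contra hc
    push_neg at hc
    have h3 : (3:ℤ) ≤ (p:ℤ) - 2*(n:ℤ) + 2 := hc
    nlinarith [h2Nq, hn', mul_nonneg (by linarith : (0:ℤ) ≤ (p:ℤ) - 2*(n:ℤ) + 2 - 3)
      (by linarith : (0:ℤ) ≤ (n:ℤ))]
  have hcase : (p:ℤ) = 2*(n:ℤ) - 1 ∨ (p:ℤ) = 2*(n:ℤ) := by omega
  rcases hcase with hpc | hpc
  · rw [hpc] at key
    ring_nf at key
    -- key : linear; contradiction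
    omega
  · rw [hpc] at key h3L
    ring_nf at key h3L
    have hD2 : decOut r A = 2 := by omega
    have hdA : draws r A = 0 := by omega
    have hp2 : p = 2 * n := by exact_mod_cast hpc
    -- endgame
    have hwo_sum : ∑ i ∈ Finset.univ.erase A, wo r A i = 2 := by
      rw [sum_wo]; exact hD2
    have hBC := Finset.card_filter_add_card_filter_not
      (s := Finset.univ.erase A) (p := fun i => wo r A i = 0)
    have hCcard : ((Finset.univ.erase A).filter (fun i => ¬ wo r A i = 0)).card ≤ 2 := by
      have h1 : ((Finset.univ.erase A).filter (fun i => ¬ wo r A i = 0)).card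
          = ∑ i ∈ (Finset.univ.erase A).filter (fun i => ¬ wo r A i = 0), 1 := by simp
      have h2 : ∑ i ∈ (Finset.univ.erase A).filter (fun i => ¬ wo r A i = 0), 1
          ≤ ∑ i ∈ (Finset.univ.erase A).filter (fun i => ¬ wo r A i = 0), wo r A i :=
        Finset.sum_le_sum (fun i hi =>
          Nat.one_le_iff_ne_zero.mpr (Finset.mem_filter.mp hi).2)
      have h3 : ∑ i ∈ (Finset.univ.erase A).filter (fun i => ¬ wo r A i = 0), wo r A i
          ≤ ∑ i ∈ Finset.univ.erase A, wo r A i :=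
        Finset.sum_le_sum_of_subset (Finset.filter_subset _ _)
      omega
    have hBcard : n - 3 ≤ ((Finset.univ.erase A).filter (fun i => wo r A i = 0)).card := by
      rw [hcard] at hBC
      omega
    have hloB : ∀ i ∈ (Finset.univ.erase A).filter (fun i => wo r A i = 0),
        lo r A i = 2 := by
      intro i hiB
      obtain ⟨hi1, hwoi⟩ := Finset.mem_filter.mp hiB
      have hiA : i ≠ A := (Finset.mem_erase.mp hi1).1
      have e1 := team_eq r i p (h i)
      have e2 := wins_split r A i
      have e3 := losses_split r A i
      have e4 := wva_add_lva r A hdA hiA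
      omega
    have hfin : 2 * ((Finset.univ.erase A).filter (fun i => wo r A i = 0)).card
        ≤ ∑ i ∈ Finset.univ.erase A, lo r A i := by
      calc 2 * ((Finset.univ.erase A).filter (fun i => wo r A i = 0)).card
          = ∑ _i ∈ (Finset.univ.erase A).filter (fun i => wo r A i = 0), 2 := by
            rw [Finset.sum_const, smul_eq_mul]; ring
        _ = ∑ i ∈ (Finset.univ.erase A).filter (fun i => wo r A i = 0), lo r A i :=
            Finset.sum_congr rfl (fun i hi => (hloB i hi).symm)
        _ ≤ ∑ i ∈ Finset.univ.erase A, lo r A i :=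
            Finset.sum_le_sum_of_subset (Finset.filter_subset _ _)
    rw [sum_lo, hD2] at hfin
    omega

end TiedAux

/-- for `n ≥ 5`, in a league tied with common score `p ≥ 2n−1`,
`(n−1)·p − P̄(A) ≥ 2(n−1)(n−2) + 3` for every team `A`. -/
theorem tied_first_constraint (n : ℕ) (hn : 5 ≤ n) (r : LeagueOutcome n) (p : ℕ)
    (h : ∀ i, totalPoints r i = p) (hp : 2 * n - 1 ≤ p) :
    ∀ A : Fin n,
      2 * ((n : ℤ) - 1) * ((n : ℤ) - 2) + 3 ≤
        ((n : ℤ) - 1) * (p : ℤ) - (oppPoints r A : ℤ) := by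
  intro A
  have k1 := TiedAux.key1 r A p h
  have k2 := TiedAux.key2 r A
  have k3 := TiedAux.card_S r A
  have k4 := TiedAux.decOut_ge hn r p h hp A
  have h1n : 1 ≤ n := by omega
  have hnn : n ≤ n * n := Nat.le_mul_of_pos_left n (by omega)
  zify [h1n, hnn] at k3
  have k1' : (n:ℤ) * p = (TiedAux.T r A : ℤ) + p + (oppPoints r A : ℤ) := by
    exact_mod_cast k1
  have k2' : (TiedAux.T r A : ℤ) = 2 * ((Finset.univ.filter
      (fun m : TiedAux.Mt n => m.val.1 ≠ A ∧ m.val.2 ≠ A)).card : ℤ)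
      + (TiedAux.decOut r A : ℤ) := by exact_mod_cast k2
  have k4' : (3:ℤ) ≤ (TiedAux.decOut r A : ℤ) := by exact_mod_cast k4
  nlinarith [k1', k2', k3, k4']
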